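/- arXiv:2308.13776 — 3 statements merged into one kernel-verified Lean document; each statement's English description precedes it below -/
import Mathlib

section
/- For every γ ∈ (0, 1/μ̄] and every k ≥ k̄: F(x^{k+1}) + (1/2)⟨d^k, 𝒢_k d^k⟩ ≤ Φ_γ(z^k) ≤ F(x^k) + (L_f/2)‖d^k‖² + ς_k, and moreover Φ_γ(z^k) ≥ F(y^k) + (1/2)⟨d^k, 𝒢_k d^k⟩. -/
open Set Filter
open scoped RealInnerProductSpace ENNReal

noncomputable section

attribute [local instance] Classical.propDecidable

variable {X : Type*} [NormedAddCommGroup X] [InnerProductSpace ℝ X] [FiniteDimensional ℝ X]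

/-- `g` extended by `+∞` outside its domain `s`. -/
def extE (g : X → ℝ) (s : Set X) (x : X) : EReal := if x ∈ s then (g x : EReal) else ⊤

/-- The objective `F = f + g`, extended-real valued. -/
def FE (f g : X → ℝ) (s : Set X) (x : X) : EReal := (f x : EReal) + extE g s x

/-- The strongly convex model `Θ_k` with base point `xk` and metric `G`, evaluated at `z`. -/
def Theta (f g : X → ℝ) (fgrad : X → X) (G : X →L[ℝ] X) (xk z : X) : ℝ :=
  f xk + ⟪fgrad xk, z - xk⟫ + (1/2) * ⟪z - xk, G (z - xk)⟫ + g z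

/-- `φ_{γ,D}(x) = (1/(2γ)) ⟪ x, D x ⟫ - f x`. -/
def phiGD (γ : ℝ) (D : X →L[ℝ] X) (f : X → ℝ) (x : X) : ℝ :=
  (1 / (2 * γ)) * ⟪x, D x⟫ - f x

/-- `∇φ_{γ,D}(x) = γ⁻¹ D x - ∇f x`. -/
def phiGDgrad (γ : ℝ) (D : X →L[ℝ] X) (fgrad : X → X) (x : X) : X :=
  (1 / γ) • D x - fgrad x

/-- Bregman function `B_{γ,D}(y, x)`, equal to `+∞` when `x ∉ cl (dom g)`. -/
def BregE (γ : ℝ) (D : X →L[ℝ] X) (f : X → ℝ) (fgrad : X → X) (s : Set X)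
    (y x : X) : EReal :=
  if x ∈ closure s then
    ((phiGD γ D f y - phiGD γ D f x - ⟪phiGDgrad γ D fgrad x, y - x⟫ : ℝ) : EReal)
  else ⊤

/-- `G_{γ,D}(x, y) = F(y) + B_{γ,D}(y, x)`. -/
def GE (γ : ℝ) (D : X →L[ℝ] X) (f : X → ℝ) (fgrad : X → X) (g : X → ℝ) (s : Set X)
    (x y : X) : EReal := FE f g s y + BregE γ D f fgrad s y x

/-- The forward-backward envelope `F_{γ,D}(x) = inf_y G_{γ,D}(x, y)`. -/
def FBenvE (γ : ℝ) (D : X →L[ℝ] X) (f : X → ℝ) (fgrad : X → X) (g : X → ℝ) (s : Set X)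
    (x : X) : EReal := ⨅ y : X, GE γ D f fgrad g s x y

set_option linter.unusedSectionVars false

lemma FE_eq (f g : X → ℝ) (s : Set X) {x : X} (hx : x ∈ s) :
    FE f g s x = ((f x + g x : ℝ) : EReal) := by
  simp [FE, extE, hx, EReal.coe_add]

lemma FE_top (f g : X → ℝ) (s : Set X) {x : X} (hx : x ∉ s) :
    FE f g s x = ⊤ := by
  simp [FE, extE, hx]

lemma mem_of_FE_le (f g : X → ℝ) (s : Set X) {x : X} {c : ℝ}
    (h : FE f g s x ≤ (c : EReal)) : x ∈ s := by
  by_contra hx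
  rw [FE_top f g s hx] at h
  exact absurd (h.trans_lt (EReal.coe_lt_top c)) (lt_irrefl _)

lemma GE_eq (γ : ℝ) (f g : X → ℝ) (fgrad : X → X) (s : Set X) {x y : X}
    (hx : x ∈ closure s) (hy : y ∈ s) :
    GE γ (ContinuousLinearMap.id ℝ X) f fgrad g s x y
      = ((f x + ⟪fgrad x, y - x⟫ + (1/(2*γ)) * ‖y - x‖^2 + g y : ℝ) : EReal) := by
  rw [GE, BregE, if_pos hx, FE_eq f g s hy, ← EReal.coe_add, EReal.coe_eq_coe_iff]
  simp only [phiGD, phiGDgrad, ContinuousLinearMap.id_apply]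
  rw [inner_sub_left, real_inner_smul_left]
  have h1 : ‖y - x‖^2 = ⟪y,y⟫ - ⟪y,x⟫ - (⟪x,y⟫ - ⟪x,x⟫) := by
    rw [← real_inner_self_eq_norm_sq, inner_sub_left, inner_sub_right, inner_sub_right]
  rw [h1, inner_sub_right, inner_sub_right]
  simp only [real_inner_comm y x]
  ring

lemma GE_top (γ : ℝ) (D : X →L[ℝ] X) (f g : X → ℝ) (fgrad : X → X) (s : Set X) {x y : X}
    (hy : y ∉ s) : GE γ D f fgrad g s x y = ⊤ := by
  rw [GE, FE_top f g s hy, BregE]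
  split <;> simp [← EReal.coe_sub, EReal.top_add_coe]

lemma descent (f : X → ℝ) (fgrad : X → X) (O : Set X) (hO : IsOpen O)
    (hfgrad : ∀ z ∈ O, HasGradientAt f (fgrad z) z)
    (Γ : Set X) (hΓconv : Convex ℝ Γ) (hΓO : Γ ⊆ O)
    (Lf : ℝ) (hLf : 0 ≤ Lf) (hLip : LipschitzOnWith (Real.toNNReal Lf) fgrad Γ)
    {x y : X} (hx : x ∈ Γ) (hy : y ∈ Γ) :
    f y ≤ f x + ⟪fgrad x, y - x⟫ + (Lf/2) * ‖y - x‖^2 := by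
  set d := y - x with hd
  have hline : ∀ t ∈ Set.Icc (0:ℝ) 1, x + t • d ∈ Γ := fun t ht =>
    hΓconv.add_smul_sub_mem hx hy ht
  have hder : ∀ t : ℝ, x + t • d ∈ O →
      HasDerivAt (fun t : ℝ => f (x + t • d)) ⟪fgrad (x + t • d), d⟫ t := by
    intro t ht
    have h1 : HasDerivAt (fun t : ℝ => x + t • d) d t := by
      simpa using ((hasDerivAt_id t).smul_const d).const_add x
    have h2 := (hfgrad _ ht).hasFDerivAt
    have h3 := h2.comp_hasDerivAt t h1
    convert h3 using 1
    · rfl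
    · rfl
    · rfl
    · simp
  set φ : ℝ → ℝ := fun t => f (x + t • d) - (⟪fgrad x, d⟫ * t + Lf/2 * ‖d‖^2 * t^2) with hφ
  have hφder : ∀ t ∈ Set.Icc (0:ℝ) 1,
      HasDerivAt φ (⟪fgrad (x + t • d), d⟫ - (⟪fgrad x, d⟫ + Lf * ‖d‖^2 * t)) t := by
    intro t ht
    have h1 := hder t (hΓO (hline t ht))
    have h2 : HasDerivAt (fun t : ℝ => ⟪fgrad x, d⟫ * t + Lf/2 * ‖d‖^2 * t^2)
        (⟪fgrad x, d⟫ + Lf * ‖d‖^2 * t) t := by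
      have := ((hasDerivAt_id t).const_mul (⟪fgrad x, d⟫)).add
        (((hasDerivAt_pow 2 t).const_mul (Lf/2 * ‖d‖^2)))
      convert this using 1
      · rfl
      · rfl
      · rfl
      · simp only [Nat.cast_ofNat, Nat.reduceSub]
        ring
    exact h1.sub h2
  have hanti : AntitoneOn φ (Set.Icc (0:ℝ) 1) := by
    apply antitoneOn_of_deriv_nonpos (convex_Icc 0 1)
    · exact fun t ht => ((hφder t ht).continuousAt).continuousWithinAt
    · intro t ht
      rw [interior_Icc] at ht
      exact ((hφder t (Set.mem_Icc_of_Ioo ht)).differentiableAt).differentiableWithinAt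
    · intro t ht
      rw [interior_Icc] at ht
      rw [(hφder t (Set.mem_Icc_of_Ioo ht)).deriv]
      have hp : x + t • d ∈ Γ := hline t (Set.mem_Icc_of_Ioo ht)
      have hlip := hLip.dist_le_mul _ hp _ hx
      rw [dist_eq_norm, dist_eq_norm, Real.coe_toNNReal _ hLf] at hlip
      have h1 : ⟪fgrad (x + t • d) - fgrad x, d⟫ ≤ ‖fgrad (x + t • d) - fgrad x‖ * ‖d‖ :=
        real_inner_le_norm _ _
      have h2 : ‖x + t • d - x‖ = t * ‖d‖ := by
        rw [add_sub_cancel_left, norm_smul, Real.norm_eq_abs, abs_of_pos ht.1]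
      rw [inner_sub_left] at h1
      rw [h2] at hlip
      nlinarith [mul_le_mul_of_nonneg_right hlip (norm_nonneg d), h1, ht.1.le,
        norm_nonneg d]
  have h01 := hanti (Set.left_mem_Icc.mpr zero_le_one) (Set.right_mem_Icc.mpr zero_le_one)
    zero_le_one
  simp only [hφ, zero_smul, add_zero, one_smul] at h01
  have : x + d = y := by rw [hd]; abel
  rw [this] at h01
  nlinarith [h01]

/-- sandwich inequalities for `Φ_γ(z^k)`. -/
theorem potential_sandwich
    (f g : X → ℝ) (domg O : Set X) (fgrad : X → X)
    (hdom : domg.Nonempty) (hO : IsOpen O) (hclO : closure domg ⊆ O)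
    (hgconv : ConvexOn ℝ domg g) (hgcont : ContinuousOn g domg)
    (hglsc : LowerSemicontinuous (extE g domg))
    (hflsc : LowerSemicontinuous f)
    (hfC2 : ContDiffOn ℝ 2 f O)
    (hfgrad : ∀ z ∈ O, HasGradientAt f (fgrad z) z)
    (hFlb : ∃ c : ℝ, ∀ z ∈ domg, c ≤ f z + g z)
    (μ σ β : ℝ) (hμ : 0 < μ) (hβ : 0 < β ∧ β < 1) (hσ : 0 < σ ∧ σ < (1/2) * min 1 μ)
    (eps : ℕ → ℝ) (heps : ∀ k, 0 < eps k) (hepsbd : ∃ C : ℝ, ∀ k, eps k ≤ C)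
    (kbar : ℕ) (hkbar : ∀ k, kbar ≤ k → eps k ≤ μ / 10)
    (x y xbar : ℕ → X) (G : ℕ → X →L[ℝ] X) (m : ℕ → ℕ)
    (hx0 : x 0 ∈ domg)
    (hGsa : ∀ k, ∀ u v : X, ⟪G k u, v⟫ = ⟪u, G k v⟫)
    (hGlb : ∀ k, ∀ u : X, μ * ‖u‖ ^ 2 ≤ ⟪u, G k u⟫)
    (hxbar : ∀ k, xbar k ∈ domg ∧ ∀ z ∈ domg,
      Theta f g fgrad (G k) (x k) (xbar k) ≤ Theta f g fgrad (G k) (x k) z)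
    (hy : ∀ k, y k ∈ domg ∧
      Theta f g fgrad (G k) (x k) (y k) < Theta f g fgrad (G k) (x k) (x k) ∧
      Theta f g fgrad (G k) (x k) (y k) - Theta f g fgrad (G k) (x k) (xbar k)
        ≤ eps k * ‖y k - x k‖ ^ 2)
    (hls : ∀ k,
      (FE f g domg (x k + β ^ (m k) • (y k - x k))
        ≤ ((f (x k) + g (x k) - σ * β ^ (m k) * ‖y k - x k‖ ^ 2 : ℝ) : EReal)) ∧
      ∀ j < m k, ¬ (FE f g domg (x k + β ^ j • (y k - x k))
        ≤ ((f (x k) + g (x k) - σ * β ^ j * ‖y k - x k‖ ^ 2 : ℝ) : EReal)))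
    (hupd : ∀ k,
      (FE f g domg (y k) < FE f g domg (x k + β ^ (m k) • (y k - x k)) ∧ x (k+1) = y k) ∨
      ((¬ FE f g domg (y k) < FE f g domg (x k + β ^ (m k) • (y k - x k))) ∧
        x (k+1) = x k + β ^ (m k) • (y k - x k)))
    (hxbdd : ∃ R : ℝ, ∀ k, ‖x k‖ ≤ R)
    (μbar : ℝ) (hμbar : 0 < μbar) (hGub : ∀ k, ‖G k‖ ≤ μbar)
    (Γ : Set X) (hΓc : IsCompact Γ) (hΓconv : Convex ℝ Γ) (hΓO : Γ ⊆ O)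
    (hΓx : ∀ k, x k ∈ Γ) (hΓy : ∀ k, y k ∈ Γ)
    (Lf : ℝ) (hLf : 0 < Lf) (hLip : LipschitzOnWith (Real.toNNReal Lf) fgrad Γ)
    (γ : ℝ) (hγ : 0 < γ) (hγle : γ ≤ 1 / μbar)
    (Fenv : X → ℝ)
    (hFenv : ∀ z ∈ closure domg,
      (Fenv z : EReal) = FBenvE γ (ContinuousLinearMap.id ℝ X) f fgrad g domg z) :
    ∀ k, kbar ≤ k →
      (FE f g domg (x (k + 1)) + (((1/2) * ⟪y k - x k, G k (y k - x k)⟫ : ℝ) : EReal)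
        ≤ ((Fenv (x k) + (Lf/2) * ‖y k - x k‖ ^ 2 + eps k * ‖y k - x k‖ ^ 2 : ℝ) : EReal)) ∧
      (Fenv (x k) + (Lf/2) * ‖y k - x k‖ ^ 2 + eps k * ‖y k - x k‖ ^ 2
        ≤ f (x k) + g (x k) + (Lf/2) * ‖y k - x k‖ ^ 2 + eps k * ‖y k - x k‖ ^ 2) ∧
      (f (y k) + g (y k) + (1/2) * ⟪y k - x k, G k (y k - x k)⟫
        ≤ Fenv (x k) + (Lf/2) * ‖y k - x k‖ ^ 2 + eps k * ‖y k - x k‖ ^ 2) := by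
  intro k hk
  have hxdom : ∀ n, x n ∈ domg := by
    intro n; induction n with
    | zero => exact hx0
    | succ n ih =>
      rcases hupd n with ⟨_, h⟩ | ⟨_, h⟩
      · rw [h]; exact (hy n).1
      · rw [h]; exact mem_of_FE_le f g domg (hls n).1
  have hxcl : x k ∈ closure domg := subset_closure (hxdom k)
  have hup : Fenv (x k) ≤ f (x k) + g (x k) := by
    have h1 : (Fenv (x k) : EReal) ≤ ((f (x k) + g (x k) : ℝ) : EReal) := by
      rw [hFenv (x k) hxcl, FBenvE]
      refine iInf_le_of_le (x k) ?_
      rw [GE_eq γ f g fgrad domg hxcl (hxdom k), EReal.coe_le_coe_iff]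
      simp
    exact_mod_cast h1
  have hμbarγ : μbar ≤ 1/γ := by
    rw [le_div_iff₀ hγ]
    have h1 : γ * μbar ≤ 1 := (le_div_iff₀ hμbar).mp hγle
    linarith [h1, mul_comm γ μbar]
  have hquad : ∀ u : X, ⟪u, G k u⟫ ≤ (1/γ) * ‖u‖^2 := by
    intro u
    have h1 : ⟪u, G k u⟫ ≤ ‖u‖ * ‖G k u‖ := real_inner_le_norm _ _
    have h2 : ‖G k u‖ ≤ ‖G k‖ * ‖u‖ := (G k).le_opNorm u
    have h3 := hGub k
    have h4 : ‖u‖ * ‖G k u‖ ≤ ‖u‖ * (‖G k‖ * ‖u‖) :=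
      mul_le_mul_of_nonneg_left h2 (norm_nonneg u)
    have h6 : μbar * ‖u‖^2 ≤ (1/γ) * ‖u‖^2 :=
      mul_le_mul_of_nonneg_right hμbarγ (sq_nonneg _)
    nlinarith [norm_nonneg u]
  have hlow : Theta f g fgrad (G k) (x k) (xbar k) ≤ Fenv (x k) := by
    have h1 : ((Theta f g fgrad (G k) (x k) (xbar k) : ℝ) : EReal) ≤ (Fenv (x k) : EReal) := by
      rw [hFenv (x k) hxcl, FBenvE]
      refine le_iInf fun z => ?_
      by_cases hz : z ∈ domg
      · rw [GE_eq γ f g fgrad domg hxcl hz, EReal.coe_le_coe_iff]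
        have h2 := (hxbar k).2 z hz
        have h3 := hquad (z - x k)
        have h3' : (1/2) * ⟪z - x k, G k (z - x k)⟫ ≤ (1/(2*γ)) * ‖z - x k‖^2 := by
          have he : (1/(2*γ)) * ‖z - x k‖^2 = (1/2) * ((1/γ) * ‖z - x k‖^2) := by
            field_simp
          rw [he]; linarith
        simp only [Theta] at h2 ⊢
        linarith
      · rw [GE_top γ _ f g fgrad domg hz]; exact le_top
    exact_mod_cast h1
  have hdesc : f (y k) ≤ f (x k) + ⟪fgrad (x k), y k - x k⟫ + (Lf/2) * ‖y k - x k‖^2 :=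
    descent f fgrad O hO hfgrad Γ hΓconv hΓO Lf hLf.le hLip (hΓx k) (hΓy k)
  have hyineq := (hy k).2.2
  have hTy : Theta f g fgrad (G k) (x k) (y k)
      = f (x k) + ⟪fgrad (x k), y k - x k⟫
        + (1/2) * ⟪y k - x k, G k (y k - x k)⟫ + g (y k) := rfl
  rw [hTy] at hyineq
  have third : f (y k) + g (y k) + (1/2) * ⟪y k - x k, G k (y k - x k)⟫
      ≤ Fenv (x k) + (Lf/2) * ‖y k - x k‖ ^ 2 + eps k * ‖y k - x k‖ ^ 2 := by
    linarith
  have hstep : FE f g domg (x (k+1)) ≤ ((f (y k) + g (y k) : ℝ) : EReal) := by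
    rcases hupd k with ⟨h1, h2⟩ | ⟨h1, h2⟩
    · rw [h2, FE_eq f g domg (hy k).1]
    · rw [h2]
      rw [FE_eq f g domg (hy k).1] at h1
      exact not_lt.mp h1
  refine ⟨?_, by linarith, third⟩
  calc FE f g domg (x (k+1)) + (((1/2) * ⟪y k - x k, G k (y k - x k)⟫ : ℝ) : EReal)
      ≤ ((f (y k) + g (y k) : ℝ) : EReal)
        + (((1/2) * ⟪y k - x k, G k (y k - x k)⟫ : ℝ) : EReal) :=
        add_le_add_left hstep _
    _ = ((f (y k) + g (y k) + (1/2) * ⟪y k - x k, G k (y k - x k)⟫ : ℝ) : EReal) := by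
        norm_cast
    _ ≤ _ := EReal.coe_le_coe_iff.mpr third
end
end

section
/- For every γ ∈ (0, 1/μ̄] there exists a constant b > 0 such that ‖∇Φ_γ(z^k)‖ ≤ b‖x^k − x^{k+1}‖ for all k ≥ k̄. -/
open Set Filter
open scoped RealInnerProductSpace ENNReal

noncomputable section

attribute [local instance] Classical.propDecidable

variable {X : Type*} [NormedAddCommGroup X] [InnerProductSpace ℝ X] [FiniteDimensional ℝ X]

/-- `p` is the proximal point `prox^D_{γ g}(u)`, i.e. the minimizer over `dom g` of
`z ↦ (1/(2γ)) ⟪ z - u, D (z - u) ⟫ + g z`. -/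
def IsProxPt (γ : ℝ) (D : X →L[ℝ] X) (g : X → ℝ) (s : Set X) (u p : X) : Prop :=
  p ∈ s ∧ ∀ z ∈ s,
    (1 / (2 * γ)) * ⟪p - u, D (p - u)⟫ + g p ≤
      (1 / (2 * γ)) * ⟪z - u, D (z - u)⟫ + g z

lemma limit1 {a c : ℝ} (ha : 0 ≤ a) (h : ∀ t : ℝ, 0 < t → t ≤ 1 → (1 - t) * c ≤ a) : c ≤ a := by
  by_contra hc
  push_neg at hc
  have hc0 : 0 < c := lt_of_le_of_lt ha hc
  have ht := h ((c - a) / (2 * c)) (div_pos (by linarith) (by linarith))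
    (by rw [div_le_one (by positivity)]; linarith)
  have : (1 - (c - a) / (2 * c)) * c = (c + a) / 2 := by field_simp; ring
  rw [this] at ht
  linarith

lemma limit2 {a c : ℝ} (h : ∀ t : ℝ, 0 < t → t ≤ 1 → 0 ≤ a + t * c) : 0 ≤ a := by
  by_contra hc
  push_neg at hc
  rcases le_or_gt c 0 with h0 | h0
  · have := h 1 one_pos le_rfl; linarith
  · have ht := h (min 1 (-a / (2 * c))) (lt_min one_pos (div_pos (by linarith) (by linarith)))
      (min_le_left _ _)
    have h2 : min 1 (-a / (2 * c)) * c ≤ (-a / (2 * c)) * c :=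
      mul_le_mul_of_nonneg_right (min_le_right _ _) h0.le
    have h3 : (-a / (2 * c)) * c = -a / 2 := by field_simp
    rw [h3] at h2
    linarith

section QM
variable {g : X → ℝ} {s : Set X} (hg : ConvexOn ℝ s g)
  (A : X →L[ℝ] X) (hA : ∀ u v : X, ⟪A u, v⟫ = ⟪u, A v⟫) (l x0 : X) {p : X} (hp : p ∈ s)
  (hmin : ∀ z ∈ s, (⟪l, p - x0⟫ + (1/2) * ⟪p - x0, A (p - x0)⟫) + g p
      ≤ (⟪l, z - x0⟫ + (1/2) * ⟪z - x0, A (z - x0)⟫) + g z)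

lemma q_expand' (A : X →L[ℝ] X) (hA : ∀ u v : X, ⟪A u, v⟫ = ⟪u, A v⟫) (l x0 p w : X) (t : ℝ) :
    ⟪l, (p + t • w) - x0⟫ + (1/2) * ⟪(p + t • w) - x0, A ((p + t • w) - x0)⟫
      = (⟪l, p - x0⟫ + (1/2) * ⟪p - x0, A (p - x0)⟫)
        + t * (⟪l, w⟫ + ⟪A (p - x0), w⟫) + (t^2/2) * ⟪w, A w⟫ := by
  have hv : (p + t • w) - x0 = (p - x0) + t • w := by abel
  rw [hv]
  set v := p - x0
  have h1 : ⟪v, A (t • w)⟫ = t * ⟪A v, w⟫ := by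
    rw [map_smul, real_inner_smul_right, ← hA]
  have h2 : ⟪t • w, A v⟫ = t * ⟪A v, w⟫ := by
    rw [real_inner_smul_left, real_inner_comm]
  have h3 : ⟪t • w, A (t • w)⟫ = t^2 * ⟪w, A w⟫ := by
    rw [map_smul, real_inner_smul_left, real_inner_smul_right]; ring
  simp only [map_add, inner_add_left, inner_add_right, h1, h2, h3, real_inner_smul_right]
  ring

include hg hA hp hmin in
lemma base_ineq {z : X} (hz : z ∈ s) {t : ℝ} (ht0 : 0 < t) (ht1 : t ≤ 1) :
    0 ≤ t * (⟪l, z - p⟫ + ⟪A (p - x0), z - p⟫) + (t^2/2) * ⟪z - p, A (z - p)⟫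
        + t * (g z - g p) := by
  have hmem : p + t • (z - p) ∈ s := by
    have := hg.1 hp hz (by linarith : (0:ℝ) ≤ 1 - t) ht0.le (by ring)
    have he : (1 - t) • p + t • z = p + t • (z - p) := by
      rw [smul_sub, sub_smul, one_smul]; abel
    rwa [he] at this
  have hgc : g (p + t • (z - p)) ≤ (1 - t) * g p + t * g z := by
    have := hg.2 hp hz (by linarith : (0:ℝ) ≤ 1 - t) ht0.le (by ring)
    have he : (1 - t) • p + t • z = p + t • (z - p) := by
      rw [smul_sub, sub_smul, one_smul]; abel
    rwa [he] at this
  have h1 := hmin _ hmem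
  rw [q_expand' A hA l x0 p (z - p) t] at h1
  nlinarith [h1, hgc]

include hg hA hp hmin in
lemma var_ineq {z : X} (hz : z ∈ s) :
    0 ≤ ⟪l + A (p - x0), z - p⟫ + g z - g p := by
  have h := limit2 (a := ⟪l, z - p⟫ + ⟪A (p - x0), z - p⟫ + (g z - g p))
    (c := (1/2) * ⟪z - p, A (z - p)⟫) ?_
  · rw [inner_add_left]; linarith
  · intro t ht0 ht1
    have := base_ineq hg A hA l x0 hp hmin hz ht0 ht1
    nlinarith [this]

include hg hA hp hmin in
lemma growth_ineq {z : X} (hz : z ∈ s) :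
    (⟪l, p - x0⟫ + (1/2) * ⟪p - x0, A (p - x0)⟫) + g p + (1/2) * ⟪z - p, A (z - p)⟫
      ≤ (⟪l, z - x0⟫ + (1/2) * ⟪z - x0, A (z - x0)⟫) + g z := by
  set Qp := ⟪l, p - x0⟫ + (1/2) * ⟪p - x0, A (p - x0)⟫
  set Qz := ⟪l, z - x0⟫ + (1/2) * ⟪z - x0, A (z - x0)⟫
  have hQz : Qz = Qp + (⟪l, z - p⟫ + ⟪A (p - x0), z - p⟫) + (1/2) * ⟪z - p, A (z - p)⟫ := by
    have := q_expand' A hA l x0 p (z - p) 1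
    simp only [one_smul, one_pow] at this
    rw [show p + (z - p) = z by abel] at this
    simp only [Qz, Qp, this]; ring
  have ha : 0 ≤ (Qz + g z) - (Qp + g p) := sub_nonneg.2 (hmin _ hz)
  have h := limit1 (a := (Qz + g z) - (Qp + g p)) (c := (1/2) * ⟪z - p, A (z - p)⟫) ha ?_
  · linarith
  · intro t ht0 ht1
    have hb := base_ineq hg A hA l x0 hp hmin hz ht0 ht1
    nlinarith [hb, hQz]
end QM

lemma descent_lemma {f : X → ℝ} {fgrad : X → X} {O Γ : Set X}
    (hΓO : Γ ⊆ O) (hΓconv : Convex ℝ Γ)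
    (hfgrad : ∀ z ∈ O, HasGradientAt f (fgrad z) z)
    {Lf : ℝ} (hLf : 0 ≤ Lf) (hLip : LipschitzOnWith (Real.toNNReal Lf) fgrad Γ)
    {x y : X} (hx : x ∈ Γ) (hy : y ∈ Γ) {α : ℝ} (hα0 : 0 ≤ α) (hα1 : α ≤ 1) :
    f (x + α • (y - x)) ≤ f x + α * ⟪fgrad x, y - x⟫ + Lf/2 * α^2 * ‖y - x‖^2 := by
  set d := y - x with hd
  have hseg : ∀ t : ℝ, 0 ≤ t → t ≤ 1 → x + t • d ∈ Γ := by
    intro t ht0 ht1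
    have := hΓconv hx hy (by linarith : (0:ℝ) ≤ 1 - t) ht0 (by ring)
    have he : (1 - t) • x + t • y = x + t • d := by
      rw [hd, smul_sub, sub_smul, one_smul]; abel
    rwa [he] at this
  set ψ : ℝ → ℝ := fun t => f (x + t • d) - t * ⟪fgrad x, d⟫ - Lf/2 * t^2 * ‖d‖^2 with hψ
  have hline : ∀ t : ℝ, HasDerivAt (fun s : ℝ => x + s • d) d t := by
    intro t
    simpa using ((hasDerivAt_id t).smul_const d).const_add x
  have hfd : ∀ t : ℝ, 0 ≤ t → t ≤ 1 →
      HasDerivAt ψ (⟪fgrad (x + t • d), d⟫ - ⟪fgrad x, d⟫ - Lf * t * ‖d‖^2) t := by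
    intro t ht0 ht1
    have hmem : x + t • d ∈ O := hΓO (hseg t ht0 ht1)
    have h1 : HasDerivAt (fun s : ℝ => f (x + s • d)) (⟪fgrad (x + t • d), d⟫) t := by
      have := (hfgrad _ hmem).hasFDerivAt.comp_hasDerivAt t (hline t)
      simp at this
      exact this
    have h2 : HasDerivAt (fun s : ℝ => s * ⟪fgrad x, d⟫) (⟪fgrad x, d⟫) t := by
      simpa using (hasDerivAt_id t).mul_const (⟪fgrad x, d⟫)
    have h3 : HasDerivAt (fun s : ℝ => Lf/2 * s^2 * ‖d‖^2) (Lf * t * ‖d‖^2) t := by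
      have := ((hasDerivAt_pow 2 t).const_mul (Lf/2)).mul_const (‖d‖^2)
      refine this.congr_deriv ?_
      simp only [Nat.cast_ofNat, Nat.add_one_sub_one, pow_one]
      ring
    exact (h1.sub h2).sub h3
  have hanti : AntitoneOn ψ (Icc (0:ℝ) 1) := by
    apply antitoneOn_of_deriv_nonpos (convex_Icc 0 1)
    · intro t ht
      exact (hfd t ht.1 ht.2).continuousAt.continuousWithinAt
    · intro t ht
      rw [interior_Icc] at ht
      exact (hfd t ht.1.le ht.2.le).differentiableAt.differentiableWithinAt
    · intro t ht
      rw [interior_Icc] at ht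
      rw [(hfd t ht.1.le ht.2.le).deriv]
      have hlip2 : ‖fgrad (x + t • d) - fgrad x‖ ≤ Lf * (t * ‖d‖) := by
        have h := hLip.dist_le_mul (x + t • d) (hseg t ht.1.le ht.2.le) x hx
        rw [dist_eq_norm, dist_eq_norm] at h
        have he : x + t • d - x = t • d := by abel
        rw [he, norm_smul, Real.norm_eq_abs, abs_of_nonneg ht.1.le] at h
        rwa [Real.coe_toNNReal _ hLf] at h
      have hin : ⟪fgrad (x + t • d) - fgrad x, d⟫ ≤ ‖fgrad (x + t • d) - fgrad x‖ * ‖d‖ :=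
        real_inner_le_norm _ _
      rw [inner_sub_left] at hin
      nlinarith [norm_nonneg d, mul_le_mul_of_nonneg_right hlip2 (norm_nonneg d)]
  have h := hanti (left_mem_Icc.2 zero_le_one) (mem_Icc.2 ⟨hα0, hα1⟩) hα0
  simp only [hψ, zero_smul, add_zero, zero_mul, sub_zero, zero_pow, mul_zero,
    ne_eq, OfNat.ofNat_ne_zero, not_false_eq_true] at h
  linarith

set_option maxHeartbeats 2000000 in
/-- gradient lower bound for the iterate gap:
`‖∇Φ_γ(z^k)‖ ≤ b ‖x^k - x^{k+1}‖`. -/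
theorem potential_gradient_bound
    (f g : X → ℝ) (domg O : Set X) (fgrad : X → X)
    (hdom : domg.Nonempty) (hO : IsOpen O) (hclO : closure domg ⊆ O)
    (hgconv : ConvexOn ℝ domg g) (hgcont : ContinuousOn g domg)
    (hglsc : LowerSemicontinuous (extE g domg))
    (hflsc : LowerSemicontinuous f)
    (hfC2 : ContDiffOn ℝ 2 f O)
    (hfgrad : ∀ z ∈ O, HasGradientAt f (fgrad z) z)
    (hFlb : ∃ c : ℝ, ∀ z ∈ domg, c ≤ f z + g z)
    (μ σ β : ℝ) (hμ : 0 < μ) (hβ : 0 < β ∧ β < 1) (hσ : 0 < σ ∧ σ < (1/2) * min 1 μ)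
    (eps : ℕ → ℝ) (heps : ∀ k, 0 < eps k) (hepsbd : ∃ C : ℝ, ∀ k, eps k ≤ C)
    (kbar : ℕ) (hkbar : ∀ k, kbar ≤ k → eps k ≤ μ / 10)
    (x y xbar : ℕ → X) (G : ℕ → X →L[ℝ] X) (m : ℕ → ℕ)
    (hx0 : x 0 ∈ domg)
    (hGsa : ∀ k, ∀ u v : X, ⟪G k u, v⟫ = ⟪u, G k v⟫)
    (hGlb : ∀ k, ∀ u : X, μ * ‖u‖ ^ 2 ≤ ⟪u, G k u⟫)
    (hxbar : ∀ k, xbar k ∈ domg ∧ ∀ z ∈ domg,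
      Theta f g fgrad (G k) (x k) (xbar k) ≤ Theta f g fgrad (G k) (x k) z)
    (hy : ∀ k, y k ∈ domg ∧
      Theta f g fgrad (G k) (x k) (y k) < Theta f g fgrad (G k) (x k) (x k) ∧
      Theta f g fgrad (G k) (x k) (y k) - Theta f g fgrad (G k) (x k) (xbar k)
        ≤ eps k * ‖y k - x k‖ ^ 2)
    (hls : ∀ k,
      (FE f g domg (x k + β ^ (m k) • (y k - x k))
        ≤ ((f (x k) + g (x k) - σ * β ^ (m k) * ‖y k - x k‖ ^ 2 : ℝ) : EReal)) ∧
      ∀ j < m k, ¬ (FE f g domg (x k + β ^ j • (y k - x k))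
        ≤ ((f (x k) + g (x k) - σ * β ^ j * ‖y k - x k‖ ^ 2 : ℝ) : EReal)))
    (hupd : ∀ k,
      (FE f g domg (y k) < FE f g domg (x k + β ^ (m k) • (y k - x k)) ∧ x (k+1) = y k) ∨
      ((¬ FE f g domg (y k) < FE f g domg (x k + β ^ (m k) • (y k - x k))) ∧
        x (k+1) = x k + β ^ (m k) • (y k - x k)))
    (hxbdd : ∃ R : ℝ, ∀ k, ‖x k‖ ≤ R)
    (μbar : ℝ) (hμbar : 0 < μbar) (hGub : ∀ k, ‖G k‖ ≤ μbar)
    (Γ : Set X) (hΓc : IsCompact Γ) (hΓconv : Convex ℝ Γ) (hΓO : Γ ⊆ O)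
    (hΓx : ∀ k, x k ∈ Γ) (hΓy : ∀ k, y k ∈ Γ)
    (Lf : ℝ) (hLf : 0 < Lf) (hLip : LipschitzOnWith (Real.toNNReal Lf) fgrad Γ)
    (γ : ℝ) (hγ : 0 < γ) (hγle : γ ≤ 1 / μbar)
    (proxg : X → X)
    (hproxg : ∀ u : X, IsProxPt γ (ContinuousLinearMap.id ℝ X) g domg u (proxg u))
    (fhess : X → X →L[ℝ] X) (hfhess : ∀ z ∈ O, HasFDerivAt fgrad (fhess z) z)
    (hfhessc : ContinuousOn fhess O) :
    ∃ b > (0:ℝ), ∀ k, kbar ≤ k →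
      Real.sqrt (‖(1/γ) • ((x k - proxg (x k - γ • fgrad (x k))) -
            γ • fhess (x k) (x k - proxg (x k - γ • fgrad (x k)))) -
          Lf • (y k - x k)‖ ^ 2 +
        ‖Lf • (y k - x k)‖ ^ 2 +
        (2 * Real.sqrt (eps k * ‖y k - x k‖ ^ 2)) ^ 2)
      ≤ b * ‖x k - x (k + 1)‖ := by
  obtain ⟨hβ0, hβ1⟩ := hβ
  obtain ⟨hσ0, hσ1⟩ := hσ
  obtain ⟨Ce, hCe⟩ := hepsbd
  have hCe0 : 0 < Ce := lt_of_lt_of_le (heps 0) (hCe 0)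
  obtain ⟨M0, hM0⟩ := hΓc.exists_bound_of_continuousOn (hfhessc.mono hΓO)
  set M : ℝ := max M0 0 with hMdef
  have hMnn : 0 ≤ M := le_max_right _ _
  have hM : ∀ z ∈ Γ, ‖fhess z‖ ≤ M := fun z hz => le_trans (hM0 z hz) (le_max_left _ _)
  have hσμ : 2 * σ < μ := by
    have : (1/2 : ℝ) * min 1 μ ≤ (1/2) * μ := by
      have := min_le_right (1:ℝ) μ; linarith
    linarith
  have hαbar : 0 < (μ - 2*σ)/Lf := div_pos (by linarith) hLf
  obtain ⟨N, hN⟩ := exists_pow_lt_of_lt_one hαbar hβ1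
  have hβN : 0 < β ^ N := pow_pos hβ0 N
  set K : ℝ := 4 * (1/γ + M) + 2 * Lf + 2 * Real.sqrt Ce with hKdef
  have hK : 0 < K := by
    rw [hKdef]
    have h1 : 0 < 1/γ := by positivity
    have h2 : 0 ≤ Real.sqrt Ce := Real.sqrt_nonneg _
    nlinarith
  refine ⟨K / β ^ N, div_pos hK hβN, ?_⟩
  -- every iterate lies in dom g
  have hcomb : ∀ u v : X, u ∈ domg → v ∈ domg → ∀ t : ℝ, 0 ≤ t → t ≤ 1 →
      u + t • (v - u) ∈ domg := by
    intro u v hu hv t ht0 ht1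
    have := hgconv.1 hu hv (by linarith : (0:ℝ) ≤ 1 - t) ht0 (by ring)
    have he : (1 - t) • u + t • v = u + t • (v - u) := by
      rw [smul_sub, sub_smul, one_smul]; abel
    rwa [he] at this
  have hxdom : ∀ k, x k ∈ domg := by
    intro k
    induction k with
    | zero => exact hx0
    | succ n ih =>
      rcases hupd n with ⟨_, he⟩ | ⟨_, he⟩
      · rw [he]; exact (hy n).1
      · rw [he]
        exact hcomb _ _ ih (hy n).1 _ (pow_pos hβ0 _).le
          (pow_le_one₀ hβ0.le hβ1.le)
  intro k hk
  set d : X := y k - x k with hd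
  -- d ≠ 0
  have hne : y k ≠ x k := by
    intro h
    have h2 := (hy k).2.1
    rw [h] at h2
    exact lt_irrefl _ h2
  have hdn : 0 < ‖d‖ := by
    rw [hd, norm_pos_iff]
    exact sub_ne_zero.2 hne
  -- Theta minimality in quadratic form
  have hminΘ : ∀ z ∈ domg,
      (⟪fgrad (x k), xbar k - x k⟫ + (1/2) * ⟪xbar k - x k, (G k) (xbar k - x k)⟫) + g (xbar k)
        ≤ (⟪fgrad (x k), z - x k⟫ + (1/2) * ⟪z - x k, (G k) (z - x k)⟫) + g z := by
    intro z hz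
    have := (hxbar k).2 z hz
    simp only [Theta] at this
    linarith
  -- quadratic growth at xbar, applied to y k
  have hgrow := growth_ineq hgconv (G k) (hGsa k) (fgrad (x k)) (x k) (hxbar k).1 hminΘ (hy k).1
  have hineq := (hy k).2.2
  have hineq' : (⟪fgrad (x k), y k - x k⟫ + (1/2) * ⟪y k - x k, (G k) (y k - x k)⟫) + g (y k)
      - ((⟪fgrad (x k), xbar k - x k⟫
          + (1/2) * ⟪xbar k - x k, (G k) (xbar k - x k)⟫) + g (xbar k))
      ≤ eps k * ‖d‖ ^ 2 := by
    simp only [Theta] at hineq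
    rw [hd]
    linarith
  have hGyb := hGlb k (y k - xbar k)
  have hek : eps k ≤ μ / 10 := hkbar k hk
  have hyxb : ‖y k - xbar k‖ ≤ ‖d‖ := by
    have h5 : μ * ‖y k - xbar k‖ ^ 2 ≤ μ/5 * ‖d‖ ^ 2 := by
      nlinarith [hgrow, hineq', hGyb, mul_le_mul_of_nonneg_right hek (sq_nonneg ‖d‖)]
    have h6 : ‖y k - xbar k‖ ^ 2 ≤ ‖d‖ ^ 2 := by nlinarith [h5, hμ, sq_nonneg ‖d‖]
    nlinarith [h6, norm_nonneg (y k - xbar k), norm_nonneg d]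
  have hxbx : ‖xbar k - x k‖ ≤ 2 * ‖d‖ := by
    have h1 : xbar k - x k = (xbar k - y k) + d := by rw [hd]; abel
    rw [h1]
    have h2 := norm_add_le (xbar k - y k) d
    rw [norm_sub_rev (xbar k) (y k)] at h2
    linarith [hyxb, h2]
  -- prox point
  set u : X := x k - γ • fgrad (x k) with hu
  set p : X := proxg u with hp
  have hpdom : p ∈ domg := (hproxg u).1
  -- VI for Theta at z = p
  have hVIΘ := var_ineq hgconv (G k) (hGsa k) (fgrad (x k)) (x k) (hxbar k).1 hminΘ hpdom
  -- prox minimality in quadratic form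
  set A2 : X →L[ℝ] X := (1/γ : ℝ) • (ContinuousLinearMap.id ℝ X) with hA2def
  have hA2 : ∀ u v : X, ⟪A2 u, v⟫ = ⟪u, A2 v⟫ := by
    intro a b
    simp only [hA2def, ContinuousLinearMap.smul_apply, ContinuousLinearMap.id_apply,
      real_inner_smul_left, real_inner_smul_right]
  have hminP : ∀ z ∈ domg,
      (⟪(0:X), p - u⟫ + (1/2) * ⟪p - u, A2 (p - u)⟫) + g p
        ≤ (⟪(0:X), z - u⟫ + (1/2) * ⟪z - u, A2 (z - u)⟫) + g z := by
    intro z hz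
    have h := (hproxg u).2 z hz
    simp only [ContinuousLinearMap.id_apply] at h
    have he : ∀ w : X, ⟪(0:X), w⟫ + (1/2) * ⟪w, A2 w⟫ = (1/(2*γ)) * ⟪w, w⟫ := by
      intro w
      simp only [hA2def, ContinuousLinearMap.smul_apply, ContinuousLinearMap.id_apply,
        real_inner_smul_right, inner_zero_left]
      field_simp
      ring
    rw [he, he]
    exact h
  have hVIP := var_ineq hgconv A2 hA2 (0:X) u hpdom hminP (hxbar k).1
  -- combine the two VIs
  set a : X := p - x k with ha
  set b : X := xbar k - x k with hb
  have hpu : p - u = a + γ • fgrad (x k) := by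
    rw [ha, hu]; abel
  have hA2pu : A2 (p - u) = (1/γ) • a + fgrad (x k) := by
    rw [hpu]
    simp only [hA2def, ContinuousLinearMap.smul_apply, ContinuousLinearMap.id_apply]
    rw [smul_add, smul_smul, one_div_mul_cancel hγ.ne', one_smul]
  have hVIP' : 0 ≤ ⟪(1/γ) • a + fgrad (x k), b - a⟫ + g (xbar k) - g p := by
    have h := hVIP
    rw [zero_add, hA2pu] at h
    have he : xbar k - p = b - a := by rw [hb, ha]; abel
    rwa [he] at h
  have hVIΘ' : 0 ≤ ⟪fgrad (x k) + (G k) b, a - b⟫ + g p - g (xbar k) := by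
    have h := hVIΘ
    have he : p - xbar k = a - b := by rw [hb, ha]; abel
    rwa [he] at h
  have hkey : (1/γ) * ⟪a, a⟫ + ⟪(G k) b, b⟫ ≤ ⟪(G k) b, a⟫ + (1/γ) * ⟪a, b⟫ := by
    have hsum : 0 ≤ ⟪fgrad (x k) + (G k) b, a - b⟫ + ⟪(1/γ) • a + fgrad (x k), b - a⟫ := by
      linarith
    simp only [inner_add_left, inner_sub_right, real_inner_smul_left] at hsum
    linarith
  have hbGb : 0 ≤ ⟪(G k) b, b⟫ := by
    have := hGlb k b
    rw [real_inner_comm]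
    nlinarith [sq_nonneg ‖b‖]
  have hGba : ⟪(G k) b, a⟫ ≤ μbar * ‖b‖ * ‖a‖ := by
    calc ⟪(G k) b, a⟫ ≤ ‖(G k) b‖ * ‖a‖ := real_inner_le_norm _ _
      _ ≤ (‖G k‖ * ‖b‖) * ‖a‖ :=
          mul_le_mul_of_nonneg_right ((G k).le_opNorm b) (norm_nonneg a)
      _ ≤ (μbar * ‖b‖) * ‖a‖ := by
          have h := mul_le_mul_of_nonneg_right (hGub k) (norm_nonneg b)
          exact mul_le_mul_of_nonneg_right h (norm_nonneg a)
      _ = μbar * ‖b‖ * ‖a‖ := by ring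
  have hab : ⟪a, b⟫ ≤ ‖a‖ * ‖b‖ := real_inner_le_norm _ _
  have haa : ⟪a, a⟫ = ‖a‖ ^ 2 := real_inner_self_eq_norm_sq a
  have hμγ : μbar ≤ 1/γ := by
    rw [le_div_iff₀ hγ]
    have := (le_div_iff₀ hμbar).1 hγle
    linarith
  have hanorm : ‖a‖ ≤ 2 * ‖b‖ := by
    have hsq : ‖a‖ ^ 2 ≤ 2 * ‖a‖ * ‖b‖ := by
      have h1 : (1/γ) * ‖a‖ ^ 2 ≤ μbar * ‖b‖ * ‖a‖ + (1/γ) * (‖a‖ * ‖b‖) := by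
        rw [← haa]
        have hγ'' : (0:ℝ) ≤ 1/γ := by positivity
        linarith [hkey, hbGb, hGba, mul_le_mul_of_nonneg_left hab hγ'']
      have h2 : μbar * ‖b‖ * ‖a‖ ≤ (1/γ) * ‖b‖ * ‖a‖ :=
        mul_le_mul_of_nonneg_right
          (mul_le_mul_of_nonneg_right hμγ (norm_nonneg b)) (norm_nonneg a)
      have hγ' : 0 < 1/γ := by positivity
      nlinarith
    by_contra hcon
    push_neg at hcon
    nlinarith [norm_nonneg a, norm_nonneg b]
  have hra : ‖x k - p‖ ≤ 4 * ‖d‖ := by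
    rw [norm_sub_rev]
    calc ‖p - x k‖ = ‖a‖ := by rw [ha]
      _ ≤ 2 * ‖b‖ := hanorm
      _ ≤ 2 * (2 * ‖d‖) := by rw [hb]; linarith [hxbx]
      _ = 4 * ‖d‖ := by ring
  -- line search: condition holds whenever β^j ≤ (μ - 2σ)/Lf
  have hcond : ∀ j : ℕ, β ^ j ≤ (μ - 2*σ)/Lf →
      FE f g domg (x k + β ^ j • (y k - x k))
        ≤ ((f (x k) + g (x k) - σ * β ^ j * ‖y k - x k‖ ^ 2 : ℝ) : EReal) := by
    intro j hj
    set α : ℝ := β ^ j with hαdef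
    have hα0 : 0 < α := pow_pos hβ0 j
    have hα1 : α ≤ 1 := pow_le_one₀ hβ0.le hβ1.le
    have hz : x k + α • (y k - x k) ∈ domg := hcomb _ _ (hxdom k) (hy k).1 α hα0.le hα1
    rw [FE, extE, if_pos hz, ← EReal.coe_add, EReal.coe_le_coe_iff]
    have hdesc := descent_lemma hΓO hΓconv hfgrad hLf.le hLip (hΓx k) (hΓy k) hα0.le hα1
    have hgc : g (x k + α • (y k - x k)) ≤ (1 - α) * g (x k) + α * g (y k) := by
      have := hgconv.2 (hxdom k) (hy k).1 (by linarith : (0:ℝ) ≤ 1 - α) hα0.le (by ring)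
      have he : (1 - α) • x k + α • y k = x k + α • (y k - x k) := by
        rw [smul_sub, sub_smul, one_smul]; abel
      rwa [he] at this
    have hθ : ⟪fgrad (x k), y k - x k⟫ + (1/2) * ⟪y k - x k, (G k) (y k - x k)⟫
        + g (y k) < g (x k) := by
      have h2 := (hy k).2.1
      simp only [Theta, sub_self, inner_zero_left, inner_zero_right, map_zero,
        mul_zero, add_zero] at h2
      linarith
    have hGd := hGlb k (y k - x k)
    have h1 : ⟪fgrad (x k), y k - x k⟫ + g (y k) - g (x k) ≤ -(μ/2) * ‖y k - x k‖ ^ 2 := by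
      linarith [hθ, hGd]
    have h2 : Lf * α ≤ μ - 2*σ := by
      have := (le_div_iff₀ hLf).1 hj
      linarith
    have h3 : 0 ≤ (α * ‖y k - x k‖ ^ 2) * ((μ - 2*σ) - Lf * α) :=
      mul_nonneg (by positivity) (by linarith)
    linarith [hdesc, hgc, mul_le_mul_of_nonneg_left h1 hα0.le, h3]
  -- m k ≤ N
  have hmkN : m k ≤ N := by
    by_contra hcon
    push_neg at hcon
    exact (hls k).2 N hcon (hcond N hN.le)
  have hβm : β ^ N ≤ β ^ (m k) := pow_le_pow_of_le_one hβ0.le hβ1.le hmkN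
  -- step lower bound
  have hstep : β ^ N * ‖d‖ ≤ ‖x k - x (k+1)‖ := by
    rcases hupd k with ⟨_, he⟩ | ⟨_, he⟩
    · rw [he]
      have h1 : ‖x k - y k‖ = ‖d‖ := by rw [hd, norm_sub_rev]
      rw [h1]
      have hb1 : β ^ N ≤ 1 := pow_le_one₀ hβ0.le hβ1.le
      nlinarith [norm_nonneg d]
    · rw [he]
      have h1 : x k - (x k + β ^ (m k) • (y k - x k)) = -(β ^ (m k) • d) := by
        rw [hd]; abel
      rw [h1, norm_neg, norm_smul, Real.norm_eq_abs, abs_of_pos (pow_pos hβ0 _)]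
      exact mul_le_mul_of_nonneg_right hβm (norm_nonneg d)
  -- final assembly
  set v1 : X := (1/γ) • ((x k - p) - γ • fhess (x k) (x k - p)) - Lf • d with hv1def
  have hv1 : ‖v1‖ ≤ (1/γ) * ‖x k - p‖ + M * ‖x k - p‖ + Lf * ‖d‖ := by
    have he : (1/γ) • ((x k - p) - γ • fhess (x k) (x k - p))
        = (1/γ) • (x k - p) - fhess (x k) (x k - p) := by
      rw [smul_sub, smul_smul, one_div_mul_cancel hγ.ne', one_smul]
    calc ‖v1‖ = ‖((1/γ) • (x k - p) - fhess (x k) (x k - p)) - Lf • d‖ := by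
          rw [hv1def, he]
      _ ≤ ‖(1/γ) • (x k - p) - fhess (x k) (x k - p)‖ + ‖Lf • d‖ := norm_sub_le _ _
      _ ≤ (‖(1/γ) • (x k - p)‖ + ‖fhess (x k) (x k - p)‖) + ‖Lf • d‖ := by
          gcongr
          exact norm_sub_le _ _
      _ ≤ ((1/γ) * ‖x k - p‖ + M * ‖x k - p‖) + Lf * ‖d‖ := by
          gcongr
          · rw [norm_smul, Real.norm_eq_abs, abs_of_pos (by positivity : (0:ℝ) < 1/γ)]
          · calc ‖fhess (x k) (x k - p)‖ ≤ ‖fhess (x k)‖ * ‖x k - p‖ :=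
                (fhess (x k)).le_opNorm _
              _ ≤ M * ‖x k - p‖ :=
                mul_le_mul_of_nonneg_right (hM _ (hΓx k)) (norm_nonneg _)
          · rw [norm_smul, Real.norm_eq_abs, abs_of_pos hLf]
      _ = (1/γ) * ‖x k - p‖ + M * ‖x k - p‖ + Lf * ‖d‖ := by ring
  have hv2 : ‖Lf • d‖ = Lf * ‖d‖ := by
    rw [norm_smul, Real.norm_eq_abs, abs_of_pos hLf]
  have hs3 : 2 * Real.sqrt (eps k * ‖d‖ ^ 2) ≤ 2 * Real.sqrt Ce * ‖d‖ := by
    rw [Real.sqrt_mul (heps k).le, Real.sqrt_sq (norm_nonneg d)]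
    have h := mul_le_mul_of_nonneg_right (Real.sqrt_le_sqrt (hCe k)) (norm_nonneg d)
    linarith
  have hs3nn : 0 ≤ 2 * Real.sqrt (eps k * ‖d‖ ^ 2) := by positivity
  set S : ℝ := ‖v1‖ + ‖Lf • d‖ + 2 * Real.sqrt (eps k * ‖d‖ ^ 2) with hSdef
  have hSnn : 0 ≤ S := by positivity
  have hsqrt : Real.sqrt (‖v1‖ ^ 2 + ‖Lf • d‖ ^ 2 + (2 * Real.sqrt (eps k * ‖d‖ ^ 2)) ^ 2)
      ≤ S := by
    rw [show S = Real.sqrt (S ^ 2) from (Real.sqrt_sq hSnn).symm]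
    apply Real.sqrt_le_sqrt
    rw [hSdef]
    nlinarith [mul_nonneg (norm_nonneg v1) (norm_nonneg (Lf • d)),
      mul_nonneg (norm_nonneg v1) hs3nn, mul_nonneg (norm_nonneg (Lf • d)) hs3nn]
  have hSK : S ≤ K * ‖d‖ := by
    have hA1 : (1/γ) * ‖x k - p‖ ≤ (1/γ) * (4*‖d‖) :=
      mul_le_mul_of_nonneg_left hra (by positivity)
    have hA2 : M * ‖x k - p‖ ≤ M * (4*‖d‖) := mul_le_mul_of_nonneg_left hra hMnn
    rw [hSdef, hKdef]
    linarith [hv1, hv2, hs3, hA1, hA2]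
  have hfin : K * ‖d‖ ≤ K / β ^ N * ‖x k - x (k+1)‖ := by
    rw [div_mul_eq_mul_div, le_div_iff₀ hβN]
    calc K * ‖d‖ * β ^ N = K * (β ^ N * ‖d‖) := by ring
      _ ≤ K * ‖x k - x (k+1)‖ := mul_le_mul_of_nonneg_left hstep hK.le
  calc Real.sqrt (‖v1‖ ^ 2 + ‖Lf • d‖ ^ 2 + (2 * Real.sqrt (eps k * ‖d‖ ^ 2)) ^ 2)
      ≤ S := hsqrt
    _ ≤ K * ‖d‖ := hSK
    _ ≤ K / β ^ N * ‖x k - x (k+1)‖ := hfin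
end
end

section
/- Let x ∈ dom g, let 𝒢 be a self-adjoint linear operator on 𝕏 with 𝒢 ⪰ μ̲I for some μ̲ > 0, and let γ > 0 satisfy γ‖𝒢‖ ≤ 1. Define Θ(z) = f(x) + ⟨∇f(x), z − x⟩ + (1/2)⟨z − x, 𝒢(z − x)⟩ + g(z), let x̄ be its unique minimizer, and let p = prox_{γg}(x − γ∇f(x)). Then ‖x̄ − p‖ ≤ √((1 − μ̲γ)/(γμ̲)) · ‖x̄ − x‖. -/
open Set Filter
open scoped RealInnerProductSpace ENNReal

noncomputable section

attribute [local instance] Classical.propDecidable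

variable {X : Type*} [NormedAddCommGroup X] [InnerProductSpace ℝ X] [FiniteDimensional ℝ X]

lemma aux_nonneg_of_forall {S c : ℝ} (hc : 0 ≤ c)
    (h : ∀ t : ℝ, 0 < t → t ≤ 1 → 0 ≤ S + t * c) : 0 ≤ S := by
  by_contra hS
  push_neg at hS
  rcases eq_or_lt_of_le hc with hc0 | hc0
  · have := h 1 one_pos le_rfl; nlinarith
  · rcases le_or_gt (-S / (2 * c)) 1 with h1 | h1
    · have ht : 0 < -S / (2 * c) := div_pos (by linarith) (by linarith)
      have h2 := h _ ht h1
      have h3 : -S / (2 * c) * c = -S / 2 := by field_simp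
      nlinarith
    · have h2 := h 1 one_pos le_rfl
      have h4 := (lt_div_iff₀ (show (0:ℝ) < 2*c by linarith)).mp h1
      nlinarith

set_option maxHeartbeats 1000000 in
/-- distance between the minimizer `x̄` of `Θ` and the proximal-gradient
point `p = prox_{γ g}(x - γ ∇f(x))`. -/
theorem minimizer_prox_distance
    (f g : X → ℝ) (domg O : Set X) (fgrad : X → X)
    (hdom : domg.Nonempty) (hO : IsOpen O) (hclO : closure domg ⊆ O)
    (hgconv : ConvexOn ℝ domg g) (hgcont : ContinuousOn g domg)
    (hglsc : LowerSemicontinuous (extE g domg))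
    (hflsc : LowerSemicontinuous f)
    (hfC2 : ContDiffOn ℝ 2 f O)
    (hfgrad : ∀ z ∈ O, HasGradientAt f (fgrad z) z)
    (hFlb : ∃ c : ℝ, ∀ z ∈ domg, c ≤ f z + g z)
    (μ : ℝ) (hμ : 0 < μ) (G : X →L[ℝ] X)
    (hGsa : ∀ u v : X, ⟪G u, v⟫ = ⟪u, G v⟫)
    (hGlb : ∀ u : X, μ * ‖u‖ ^ 2 ≤ ⟪u, G u⟫)
    (γ : ℝ) (hγ : 0 < γ) (hγG : γ * ‖G‖ ≤ 1)
    (x0 : X) (hx0 : x0 ∈ domg)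
    (xbar : X)
    (hxbar : xbar ∈ domg ∧ ∀ z ∈ domg, Theta f g fgrad G x0 xbar ≤ Theta f g fgrad G x0 z)
    (huniq : ∀ z ∈ domg, (∀ w ∈ domg, Theta f g fgrad G x0 z ≤ Theta f g fgrad G x0 w) → z = xbar)
    (p : X) (hp : IsProxPt γ (ContinuousLinearMap.id ℝ X) g domg (x0 - γ • fgrad x0) p) :
    ‖xbar - p‖ ≤ Real.sqrt ((1 - μ * γ) / (γ * μ)) * ‖xbar - x0‖ := by
  obtain ⟨hpdom, hpmin⟩ := hp
  obtain ⟨hxbdom, hxbmin⟩ := hxbar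
  by_cases hxp : xbar = p
  · rw [hxp, sub_self, norm_zero]
    positivity
  set u : X := x0 - γ • fgrad x0 with hu
  -- division-free prox minimality
  have hpmin2 : ∀ z ∈ domg,
      ‖p - u‖^2 + 2 * γ * g p ≤ ‖z - u‖^2 + 2 * γ * g z := by
    intro z hz
    have h0 := hpmin z hz
    simp only [ContinuousLinearMap.id_apply, real_inner_self_eq_norm_sq] at h0
    have h1 := mul_le_mul_of_nonneg_left h0 (show (0:ℝ) ≤ 2*γ by linarith)
    have e1 : 2*γ * (1 / (2 * γ) * ‖p - u‖ ^ 2 + g p) = ‖p - u‖^2 + 2 * γ * g p := by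
      field_simp
    have e2 : 2*γ * (1 / (2 * γ) * ‖z - u‖ ^ 2 + g z) = ‖z - u‖^2 + 2 * γ * g z := by
      field_simp
    rw [e1, e2] at h1
    exact h1
  -- first-order optimality for p (division-free)
  have hkey : ∀ z ∈ domg, 0 ≤ 2 * ⟪p - u, z - p⟫ + 2 * γ * (g z - g p) := by
    intro z hz
    set d : X := z - p with hd
    refine aux_nonneg_of_forall (c := ‖d‖^2) (sq_nonneg _) ?_
    intro t ht0 ht1
    have heq : p + t • d = (1 - t) • p + t • z := by
      rw [hd, smul_sub, sub_smul, one_smul]; abel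
    have hzt : p + t • d ∈ domg := by
      rw [heq]; exact hgconv.1 hpdom hz (by linarith) (le_of_lt ht0) (by ring)
    have hg : g (p + t • d) ≤ (1 - t) * g p + t * g z := by
      rw [heq]; exact hgconv.2 hpdom hz (by linarith) (le_of_lt ht0) (by ring)
    have hmin := hpmin2 _ hzt
    have hnorm : ‖(p + t • d) - u‖^2 = ‖p - u‖^2 + 2 * (t * ⟪p - u, d⟫) + t^2 * ‖d‖^2 := by
      have heq2 : (p + t • d) - u = (p - u) + t • d := by abel
      rw [heq2, ← real_inner_self_eq_norm_sq, ← real_inner_self_eq_norm_sq,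
        ← real_inner_self_eq_norm_sq, real_inner_add_add_self, real_inner_smul_right,
        real_inner_smul_left, real_inner_smul_right]
      ring
    rw [hnorm] at hmin
    have h2 : 0 ≤ t * (2 * ⟪p - u, d⟫ + 2 * γ * (g z - g p)) + t^2 * ‖d‖^2 := by
      nlinarith [hmin, hg, mul_le_mul_of_nonneg_left hg (show (0:ℝ) ≤ 2*γ by linarith)]
    have h3 := mul_le_mul_of_nonneg_left h2 (le_of_lt (inv_pos.mpr ht0))
    rw [mul_zero] at h3
    have e3 : t⁻¹ * (t * (2 * ⟪p - u, d⟫ + 2 * γ * (g z - g p)) + t^2 * ‖d‖^2)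
        = (2 * ⟪p - u, d⟫ + 2 * γ * (g z - g p)) + t * ‖d‖^2 := by
      field_simp
    rw [e3] at h3
    linarith
  -- strong prox inequality at xbar
  have hnorm2 : ‖xbar - u‖^2 = ‖p - u‖^2 + 2 * ⟪p - u, xbar - p⟫ + ‖xbar - p‖^2 := by
    have heq : xbar - u = (p - u) + (xbar - p) := by abel
    rw [heq, ← real_inner_self_eq_norm_sq, ← real_inner_self_eq_norm_sq,
      ← real_inner_self_eq_norm_sq, real_inner_add_add_self]
  have hΦ : ‖p - u‖^2 + 2 * γ * g p + ‖xbar - p‖^2 ≤ ‖xbar - u‖^2 + 2 * γ * g xbar := by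
    have hk := hkey xbar hxbdom
    rw [hnorm2]
    linarith
  -- Θ minimality at p
  have hΘ : Theta f g fgrad G x0 xbar ≤ Theta f g fgrad G x0 p := hxbmin p hpdom
  set v : X := fgrad x0 with hv
  set a : X := xbar - x0 with ha
  set b : X := p - x0 with hb
  have hΘ' : f x0 + ⟪a, v⟫ + (1/2) * ⟪a, G a⟫ + g xbar
      ≤ f x0 + ⟪b, v⟫ + (1/2) * ⟪b, G b⟫ + g p := by
    have h0 := hΘ
    simp only [Theta, ← ha, ← hb, ← hv] at h0
    have c1 : ⟪v, a⟫ = ⟪a, v⟫ := real_inner_comm _ _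
    have c2 : ⟪v, b⟫ = ⟪b, v⟫ := real_inner_comm _ _
    linarith [h0]
  have hA : 2*γ*⟪a, v⟫ + γ*⟪a, G a⟫ + 2*γ*(g xbar) ≤ 2*γ*⟪b, v⟫ + γ*⟪b, G b⟫ + 2*γ*(g p) := by
    nlinarith [mul_le_mul_of_nonneg_left hΘ' (show (0:ℝ) ≤ 2*γ by linarith)]
  have hxu : xbar - u = a + γ • v := by rw [ha, hu]; abel
  have hpu : p - u = b + γ • v := by rw [hb, hu]; abel
  have hxu2 : ‖xbar - u‖^2 = ‖a‖^2 + 2 * (γ * ⟪a, v⟫) + γ^2 * ‖v‖^2 := by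
    rw [hxu, ← real_inner_self_eq_norm_sq, ← real_inner_self_eq_norm_sq,
      ← real_inner_self_eq_norm_sq, real_inner_add_add_self, real_inner_smul_right,
      real_inner_smul_left, real_inner_smul_right]
    ring
  have hpu2 : ‖p - u‖^2 = ‖b‖^2 + 2 * (γ * ⟪b, v⟫) + γ^2 * ‖v‖^2 := by
    rw [hpu, ← real_inner_self_eq_norm_sq, ← real_inner_self_eq_norm_sq,
      ← real_inner_self_eq_norm_sq, real_inner_add_add_self, real_inner_smul_right,
      real_inner_smul_left, real_inner_smul_right]
    ring
  rw [hxu2, hpu2] at hΦ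
  -- curvature bounds
  have hGb2 : γ * ⟪b, G b⟫ ≤ ‖b‖^2 := by
    have hGb : ⟪b, G b⟫ ≤ ‖G‖ * ‖b‖^2 := by
      calc ⟪b, G b⟫ ≤ ‖b‖ * ‖G b‖ := real_inner_le_norm b (G b)
        _ ≤ ‖b‖ * (‖G‖ * ‖b‖) :=
            mul_le_mul_of_nonneg_left (G.le_opNorm b) (norm_nonneg b)
        _ = ‖G‖ * ‖b‖^2 := by ring
    nlinarith [mul_le_mul_of_nonneg_left hGb (le_of_lt hγ),
      mul_le_mul_of_nonneg_right hγG (sq_nonneg ‖b‖)]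
  have hGa2 : γ * (μ * ‖a‖^2) ≤ γ * ⟪a, G a⟫ :=
    mul_le_mul_of_nonneg_left (hGlb a) (le_of_lt hγ)
  -- main quadratic bound
  have hmain : ‖xbar - p‖^2 ≤ (1 - γ * μ) * ‖a‖^2 := by
    have e0 : (1 - γ * μ) * ‖a‖^2 = ‖a‖^2 - γ * (μ * ‖a‖^2) := by ring
    rw [e0]
    linarith [hΦ, hA, hGb2, hGa2]
  -- γ μ ≤ 1
  have he : xbar - p ≠ 0 := sub_ne_zero.mpr hxp
  have hen : 0 < ‖xbar - p‖ := norm_pos_iff.mpr he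
  have hγμ : γ * μ ≤ 1 := by
    have h1 := hGlb (xbar - p)
    have h2 : ⟪xbar - p, G (xbar - p)⟫ ≤ ‖G‖ * ‖xbar - p‖^2 := by
      calc ⟪xbar - p, G (xbar - p)⟫ ≤ ‖xbar - p‖ * ‖G (xbar - p)‖ := real_inner_le_norm _ _
        _ ≤ ‖xbar - p‖ * (‖G‖ * ‖xbar - p‖) :=
            mul_le_mul_of_nonneg_left (G.le_opNorm _) (norm_nonneg _)
        _ = ‖G‖ * ‖xbar - p‖^2 := by ring
    have hμG : μ ≤ ‖G‖ := by
      by_contra hc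
      push_neg at hc
      have hsq : 0 < ‖xbar - p‖^2 := by positivity
      nlinarith [mul_pos (sub_pos.mpr hc) hsq]
    nlinarith
  -- finish with square roots
  have hratio : (1 - γ * μ) ≤ (1 - μ * γ) / (γ * μ) := by
    rw [le_div_iff₀ (by positivity)]
    nlinarith
  have hnn : 0 ≤ (1 - μ * γ) / (γ * μ) :=
    div_nonneg (by nlinarith) (by positivity)
  have h1 : ‖xbar - p‖^2 ≤ ((1 - μ * γ) / (γ * μ)) * ‖xbar - x0‖^2 := by
    have h2 := mul_le_mul_of_nonneg_right hratio (sq_nonneg ‖a‖)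
    rw [← ha]
    linarith
  calc ‖xbar - p‖ = Real.sqrt (‖xbar - p‖^2) := (Real.sqrt_sq (norm_nonneg _)).symm
    _ ≤ Real.sqrt (((1 - μ * γ) / (γ * μ)) * ‖xbar - x0‖^2) := Real.sqrt_le_sqrt h1
    _ = Real.sqrt ((1 - μ * γ) / (γ * μ)) * ‖xbar - x0‖ := by
        rw [Real.sqrt_mul hnn, Real.sqrt_sq (norm_nonneg _)]
end
end
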